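/- Let I ⊆ ℝ be an interval and let (a,b,c) : I → ℝ³ be a differentiable solution of the gauged bracket Bach flow. Then for every t ∈ I the function t ↦ a(t)² + b(t)² + c(t)² is differentiable and its derivative satisfies d/dt (a² + b² + c²) ≤ −(1/12)·(a(t)² + b(t)² + c(t)²)³. -/

import Mathlib

/-- First component of the right-hand side `F` of the gauged bracket Bach flow. -/
noncomputable def Fa (a b c : ℝ) : ℝ :=
  -(a / 48) * (44*a^4 + 72*a^2*b^2 - 5*a^2*c^2 + 28*b^4 + 24*b^2*c^2 - 4*c^4)

/-- Second component of the right-hand side `F` of the gauged bracket Bach flow. -/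
noncomputable def Fb (a b c : ℝ) : ℝ :=
  -(b / 48) * (60*a^4 + 104*a^2*b^2 + 57*a^2*c^2 + 44*b^4 + 104*b^2*c^2 + 60*c^4)

/-- Third component of the right-hand side `F` of the gauged bracket Bach flow. -/
noncomputable def Fc (a b c : ℝ) : ℝ :=
  -(c / 48) * (-4*a^4 + 24*a^2*b^2 - 5*a^2*c^2 + 28*b^4 + 72*b^2*c^2 + 44*c^4)

/-- `(a,b,c) : ℝ → ℝ³` is a differentiable solution of the gauged bracket Bach
flow on the set `S ⊆ ℝ`. -/
def IsBachFlowSolution (a b c : ℝ → ℝ) (S : Set ℝ) : Prop :=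
  ∀ t ∈ S,
    HasDerivAt a (Fa (a t) (b t) (c t)) t ∧
    HasDerivAt b (Fb (a t) (b t) (c t)) t ∧
    HasDerivAt c (Fc (a t) (b t) (c t)) t

lemma key_ineq (a b c : ℝ) :
    2*a*Fa a b c + 2*b*Fb a b c + 2*c*Fc a b c ≤ -(1/12) * (a^2+b^2+c^2)^3 := by
  simp only [Fa, Fb, Fc]
  nlinarith [mul_nonneg (sq_nonneg (a^2 - c^2)) (add_nonneg (sq_nonneg a) (sq_nonneg c)),
    sq_nonneg (a^3), sq_nonneg (b^3), sq_nonneg (c^3),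
    mul_nonneg (sq_nonneg (a*b)) (sq_nonneg a), mul_nonneg (sq_nonneg (a*b)) (sq_nonneg b),
    mul_nonneg (sq_nonneg (b*c)) (sq_nonneg b), mul_nonneg (sq_nonneg (b*c)) (sq_nonneg c),
    mul_nonneg (mul_nonneg (sq_nonneg a) (sq_nonneg b)) (sq_nonneg c)]

/-- along a solution of the gauged bracket Bach flow, the squared
norm `a² + b² + c²` is differentiable and
`d/dt (a² + b² + c²) ≤ −(1/12)·(a² + b² + c²)³`. -/
theorem deriv_norm_sq_le (I : Set ℝ) (hI : I.OrdConnected) (a b c : ℝ → ℝ)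
    (hsol : IsBachFlowSolution a b c I) :
    ∀ t ∈ I, ∃ d : ℝ, HasDerivAt (fun s => a s ^ 2 + b s ^ 2 + c s ^ 2) d t ∧
      d ≤ -(1/12) * (a t ^ 2 + b t ^ 2 + c t ^ 2) ^ 3 := by
  intro t ht
  obtain ⟨ha, hb, hc⟩ := hsol t ht
  refine ⟨2*(a t)*Fa (a t) (b t) (c t) + 2*(b t)*Fb (a t) (b t) (c t)
    + 2*(c t)*Fc (a t) (b t) (c t), ?_, key_ineq _ _ _⟩
  have h2 : ∀ (f : ℝ → ℝ) (d : ℝ), HasDerivAt f d t →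
      HasDerivAt (fun s => f s ^ 2) (2 * f t * d) t := by
    intro f d hf
    have := hf.fun_pow 2
    simpa [mul_comm, mul_assoc, mul_left_comm] using this
  exact ((h2 a _ ha).add (h2 b _ hb)).add (h2 c _ hc)
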